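/- Let G = (V,E) be a graph on n nodes (n even) with a planted bisection V1, V2 (|V1| = |V2| = n/2), and let d_in, d_out be its intra- and inter-cluster connectivity parameters. If d_in − d_out > n/4 − 1, then the planted bisection is the unique bisection of V of minimum cost; i.e., the minimum bisection problem recovers the planted bisection. -/

import Mathlib

noncomputable section
open scoped Classical

/-- The cost of the bisection `(S, Sᶜ)` of the node set of `G`, i.e. the number of
edges of `G` with one endpoint in `S` and the other outside of `S`; each such edge
is counted once, as the ordered pair whose first component lies in `S`. -/
def cutCost {n : ℕ} (G : SimpleGraph (Fin n)) (S : Finset (Fin n)) : ℕ :=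
  ((Finset.univ : Finset (Fin n × Fin n)).filter
    (fun p => G.Adj p.1 p.2 ∧ p.1 ∈ S ∧ p.2 ∉ S)).card

/-- The degree of `v` in the graph `G[S] ∪ G[Sᶜ]`, i.e. the number of neighbors of
`v` lying on the same side of the bisection `(S, Sᶜ)` as `v`. -/
def sameDeg {n : ℕ} (G : SimpleGraph (Fin n)) (S : Finset (Fin n)) (v : Fin n) : ℕ :=
  ((Finset.univ : Finset (Fin n)).filter (fun w => G.Adj v w ∧ (w ∈ S ↔ v ∈ S))).card

/-- The degree of `v` in the graph `G₀` of edges crossing the bisection `(S, Sᶜ)`,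
i.e. the number of neighbors of `v` lying on the other side of the bisection. -/
def crossDeg {n : ℕ} (G : SimpleGraph (Fin n)) (S : Finset (Fin n)) (v : Fin n) : ℕ :=
  ((Finset.univ : Finset (Fin n)).filter (fun w => G.Adj v w ∧ ¬ (w ∈ S ↔ v ∈ S))).card

namespace MBRaux

variable {n : ℕ}

/-- Number of neighbors of `v` in `Y`. -/
def dCnt (G : SimpleGraph (Fin n)) (Y : Finset (Fin n)) (v : Fin n) : ℕ :=
  ((Finset.univ : Finset (Fin n)).filter (fun w => G.Adj v w ∧ w ∈ Y)).card

/-- Number of ordered adjacent pairs `(x, y)` with `x ∈ X`, `y ∈ Y`. -/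
def eCnt (G : SimpleGraph (Fin n)) (X Y : Finset (Fin n)) : ℕ :=
  ((Finset.univ : Finset (Fin n × Fin n)).filter
    (fun p => G.Adj p.1 p.2 ∧ p.1 ∈ X ∧ p.2 ∈ Y)).card

lemma eCnt_eq_sum (G : SimpleGraph (Fin n)) (X Y : Finset (Fin n)) :
    eCnt G X Y = ∑ v ∈ X, dCnt G Y v := by
  classical
  unfold eCnt
  rw [Finset.card_eq_sum_card_fiberwise (f := Prod.fst) (t := X)
    (fun p hp => (Finset.mem_filter.mp hp).2.2.1)]
  refine Finset.sum_congr rfl fun v hv => ?_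
  unfold dCnt
  refine Finset.card_nbij' (fun p => p.2) (fun w => (v, w)) ?_ ?_ ?_ ?_
  · intro p hp
    simp only [Finset.mem_coe, Finset.mem_filter, Finset.mem_univ, true_and] at hp ⊢
    obtain ⟨⟨h1, h2, h3⟩, h4⟩ := hp
    subst h4; exact ⟨h1, h3⟩
  · intro w hw
    simp only [Finset.mem_coe, Finset.mem_filter, Finset.mem_univ, true_and] at hw
    exact Finset.mem_filter.mpr ⟨Finset.mem_filter.mpr ⟨Finset.mem_univ _, hw.1, hv, hw.2⟩, rfl⟩
  · intro p hp
    simp only [Finset.mem_coe, Finset.mem_filter] at hp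
    exact Prod.ext hp.2.symm rfl
  · intro w hw; rfl

lemma eCnt_symm (G : SimpleGraph (Fin n)) (X Y : Finset (Fin n)) :
    eCnt G X Y = eCnt G Y X := by
  unfold eCnt
  refine Finset.card_nbij' Prod.swap Prod.swap ?_ ?_ ?_ ?_ <;>
    simp +contextual [Set.MapsTo, Set.LeftInvOn, Set.RightInvOn, Prod.swap, G.adj_comm, and_comm]

lemma dCnt_union (G : SimpleGraph (Fin n)) {Y Z : Finset (Fin n)} (hYZ : Disjoint Y Z)
    (v : Fin n) : dCnt G (Y ∪ Z) v = dCnt G Y v + dCnt G Z v := by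
  classical
  unfold dCnt
  rw [← Finset.card_union_of_disjoint]
  · congr 1
    ext w
    simp only [Finset.mem_filter, Finset.mem_union, Finset.mem_univ, true_and]
    tauto
  · rw [Finset.disjoint_left]
    intro w hw hw'
    simp only [Finset.mem_filter] at hw hw'
    exact (Finset.disjoint_left.mp hYZ) hw.2.2 hw'.2.2

lemma eCnt_union_right (G : SimpleGraph (Fin n)) (X : Finset (Fin n)) {Y Z : Finset (Fin n)}
    (hYZ : Disjoint Y Z) : eCnt G X (Y ∪ Z) = eCnt G X Y + eCnt G X Z := by
  simp [eCnt_eq_sum, dCnt_union G hYZ, Finset.sum_add_distrib]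

lemma eCnt_union_left (G : SimpleGraph (Fin n)) {X Y : Finset (Fin n)} (Z : Finset (Fin n))
    (hXY : Disjoint X Y) : eCnt G (X ∪ Y) Z = eCnt G X Z + eCnt G Y Z := by
  rw [eCnt_eq_sum, Finset.sum_union hXY, ← eCnt_eq_sum, ← eCnt_eq_sum]

lemma cutCost_eq (G : SimpleGraph (Fin n)) (S : Finset (Fin n)) :
    cutCost G S = eCnt G S Sᶜ := by
  unfold cutCost eCnt
  congr 1
  apply Finset.filter_congr
  intro p _
  simp [Finset.mem_compl]

lemma sameDeg_mem (G : SimpleGraph (Fin n)) {V1 : Finset (Fin n)} {v : Fin n} (hv : v ∈ V1) :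
    sameDeg G V1 v = dCnt G V1 v := by
  unfold sameDeg dCnt
  congr 1
  apply Finset.filter_congr
  intro w _
  simp [hv]

lemma sameDeg_not_mem (G : SimpleGraph (Fin n)) {V1 : Finset (Fin n)} {v : Fin n}
    (hv : v ∉ V1) : sameDeg G V1 v = dCnt G V1ᶜ v := by
  unfold sameDeg dCnt
  congr 1
  apply Finset.filter_congr
  intro w _
  simp [hv, Finset.mem_compl]

lemma crossDeg_mem (G : SimpleGraph (Fin n)) {V1 : Finset (Fin n)} {v : Fin n} (hv : v ∈ V1) :
    crossDeg G V1 v = dCnt G V1ᶜ v := by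
  unfold crossDeg dCnt
  congr 1
  apply Finset.filter_congr
  intro w _
  simp [hv, Finset.mem_compl]

lemma crossDeg_not_mem (G : SimpleGraph (Fin n)) {V1 : Finset (Fin n)} {v : Fin n}
    (hv : v ∉ V1) : crossDeg G V1 v = dCnt G V1 v := by
  unfold crossDeg dCnt
  congr 1
  apply Finset.filter_congr
  intro w _
  simp [hv]

lemma dCnt_le (G : SimpleGraph (Fin n)) (Y : Finset (Fin n)) (v : Fin n) (hv : v ∈ Y) :
    dCnt G Y v ≤ Y.card - 1 := by
  unfold dCnt
  calc _ ≤ (Y.erase v).card := by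
        apply Finset.card_le_card
        intro w hw
        simp only [Finset.mem_filter] at hw
        exact Finset.mem_erase.mpr ⟨fun hwv => (hwv ▸ hw.2.1).ne' rfl, hw.2.2⟩
    _ = Y.card - 1 := Finset.card_erase_of_mem hv

/-- Core lemma. -/
lemma key (G : SimpleGraph (Fin n)) (V1 S : Finset (Fin n)) (hV1 : V1.card = n / 2)
    (hS : S.card = n / 2) (din dout m : ℕ)
    (hdin : ∀ v, din ≤ sameDeg G V1 v)
    (hdout : ∀ v, crossDeg G V1 v ≤ dout)
    (hm : (V1 \ S).card = m) (hm1 : 1 ≤ m)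
    (hdm : dout + m ≤ din) :
    cutCost G V1 < cutCost G S := by
  classical
  set A := V1 ∩ S with hA
  set B := V1 \ S with hB
  set C := S \ V1 with hC
  set D := V1ᶜ \ S with hD
  have hAB : Disjoint A B := by
    rw [Finset.disjoint_left]; intro a ha hb
    simp only [hA, hB, Finset.mem_inter, Finset.mem_sdiff] at ha hb; tauto
  have hAC : Disjoint A C := by
    rw [Finset.disjoint_left]; intro a ha hb
    simp only [hA, hC, Finset.mem_inter, Finset.mem_sdiff] at ha hb; tauto
  have hCD : Disjoint C D := by
    rw [Finset.disjoint_left]; intro a ha hb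
    simp only [hC, hD, Finset.mem_sdiff] at ha hb; tauto
  have hBD : Disjoint B D := by
    rw [Finset.disjoint_left]; intro a ha hb
    simp only [hB, hD, Finset.mem_sdiff, Finset.mem_compl] at ha hb; tauto
  have hABV : A ∪ B = V1 := by
    ext a; simp only [hA, hB, Finset.mem_union, Finset.mem_inter, Finset.mem_sdiff]; tauto
  have hACS : A ∪ C = S := by
    ext a; simp only [hA, hC, Finset.mem_union, Finset.mem_inter, Finset.mem_sdiff]; tauto
  have hCDV : C ∪ D = V1ᶜ := by
    ext a
    simp only [hC, hD, Finset.mem_union, Finset.mem_sdiff, Finset.mem_compl]; tauto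
  have hBDS : B ∪ D = Sᶜ := by
    ext a
    simp only [hB, hD, Finset.mem_union, Finset.mem_sdiff, Finset.mem_compl]; tauto
  have hBcard : B.card = m := hm
  have hCcard : C.card = m := by
    have h1 : A.card + B.card = n / 2 := by
      rw [← Finset.card_union_of_disjoint hAB, hABV, hV1]
    have h2 : A.card + C.card = n / 2 := by
      rw [← Finset.card_union_of_disjoint hAC, hACS, hS]
    omega
  -- decompose the cut costs
  have hcutV : cutCost G V1 = eCnt G A C + eCnt G A D + (eCnt G B C + eCnt G B D) := by
    rw [cutCost_eq, ← hCDV, ← hABV, eCnt_union_left G _ hAB,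
      eCnt_union_right G _ hCD, eCnt_union_right G _ hCD]
  have hcutS : cutCost G S = eCnt G A B + eCnt G A D + (eCnt G C B + eCnt G C D) := by
    rw [cutCost_eq, ← hBDS, ← hACS, eCnt_union_left G _ hAC,
      eCnt_union_right G _ hBD, eCnt_union_right G _ hBD]
  -- bounds
  have hBV1 : m * din ≤ eCnt G B A + eCnt G B B := by
    have : m * din ≤ eCnt G B V1 := by
      rw [eCnt_eq_sum]
      calc m * din = B.card • din := by rw [hBcard]; simp [smul_eq_mul]
        _ ≤ _ := Finset.card_nsmul_le_sum _ _ _ (fun v hv => by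
            rw [← sameDeg_mem G (hABV ▸ Finset.mem_union_right A hv)]
            exact hdin v)
    rwa [← hABV, eCnt_union_right G _ hAB] at this
  have hCV1c : m * din ≤ eCnt G C C + eCnt G C D := by
    have hCsub : ∀ v ∈ C, v ∉ V1 := fun v hv => (Finset.mem_sdiff.mp hv).2
    have : m * din ≤ eCnt G C V1ᶜ := by
      rw [eCnt_eq_sum]
      calc m * din = C.card • din := by rw [hCcard]; simp [smul_eq_mul]
        _ ≤ _ := Finset.card_nsmul_le_sum _ _ _ (fun v hv => by
            rw [← sameDeg_not_mem G (hCsub v hv)]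
            exact hdin v)
    rwa [← hCDV, eCnt_union_right G _ hCD] at this
  have hCA : eCnt G C A + eCnt G C B ≤ m * dout := by
    have hCsub : ∀ v ∈ C, v ∉ V1 := fun v hv => (Finset.mem_sdiff.mp hv).2
    have : eCnt G C V1 ≤ m * dout := by
      rw [eCnt_eq_sum]
      calc _ ≤ C.card • dout := Finset.sum_le_card_nsmul _ _ _ (fun v hv => by
            rw [← crossDeg_not_mem G (hCsub v hv)]
            exact hdout v)
        _ = m * dout := by rw [hCcard]; simp [smul_eq_mul]
    rwa [← hABV, eCnt_union_right G _ hAB] at this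
  have hBDb : eCnt G B C + eCnt G B D ≤ m * dout := by
    have : eCnt G B V1ᶜ ≤ m * dout := by
      rw [eCnt_eq_sum]
      calc _ ≤ B.card • dout := Finset.sum_le_card_nsmul _ _ _ (fun v hv => by
            rw [← crossDeg_mem G (hABV ▸ Finset.mem_union_right A hv)]
            exact hdout v)
        _ = m * dout := by rw [hBcard]; simp [smul_eq_mul]
    rwa [← hCDV, eCnt_union_right G _ hCD] at this
  have hBB : eCnt G B B ≤ m * (m - 1) := by
    rw [eCnt_eq_sum]
    calc _ ≤ B.card • (m - 1) := Finset.sum_le_card_nsmul _ _ _ (fun v hv =>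
          hBcard ▸ dCnt_le G B v hv)
      _ = m * (m - 1) := by rw [hBcard]; simp [smul_eq_mul]
  have hCC : eCnt G C C ≤ m * (m - 1) := by
    rw [eCnt_eq_sum]
    calc _ ≤ C.card • (m - 1) := Finset.sum_le_card_nsmul _ _ _ (fun v hv =>
          hCcard ▸ dCnt_le G C v hv)
      _ = m * (m - 1) := by rw [hCcard]; simp [smul_eq_mul]
  -- symmetry
  have sAC : eCnt G A C = eCnt G C A := eCnt_symm G A C
  have sAB : eCnt G A B = eCnt G B A := eCnt_symm G A B
  have sBC : eCnt G B C = eCnt G C B := eCnt_symm G B C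
  -- arithmetic
  have hmul : m * dout + (m * (m - 1) + m) ≤ m * din := by
    have h1 : m * (dout + m) ≤ m * din := Nat.mul_le_mul_left m hdm
    have h2 : m * (m - 1) + m = m * m := by
      obtain ⟨k, rfl⟩ : ∃ k, m = k + 1 := ⟨m - 1, by omega⟩
      simp [Nat.add_sub_cancel]; ring
    calc m * dout + (m * (m - 1) + m) = m * (dout + m) := by rw [h2]; ring
      _ ≤ m * din := h1
  rw [hcutV, hcutS, sAC, sAB, sBC]
  have hp : eCnt G C A + m ≤ eCnt G B A := by
    have := hBV1; have := hBB; have := hCA; omega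
  have hq : eCnt G B D + m ≤ eCnt G C D := by
    have := hCV1c; have := hCC; have := hBDb; omega
  omega

end MBRaux

/-- Let `G` be a graph on `n` nodes (`n` even) with a planted
bisection `(V₁, V₁ᶜ)` where `|V₁| = n/2`, and let `d_in` be the minimum degree of
`G[V₁] ∪ G[V₁ᶜ]` and `d_out` the maximum degree of the crossing graph `G₀`.
If `d_in - d_out > n/4 - 1`, then the planted bisection is the unique bisection of
minimum cost. -/
theorem minimum_bisection_recovery (n : ℕ) (hn : Even n) (G : SimpleGraph (Fin n))
    (V1 : Finset (Fin n)) (hV1 : V1.card = n / 2)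
    (din dout : ℕ)
    (hdin : IsLeast (Set.range (sameDeg G V1)) din)
    (hdout : IsGreatest (Set.range (crossDeg G V1)) dout)
    (h : (din : ℝ) - (dout : ℝ) > (n : ℝ) / 4 - 1) :
    ∀ S : Finset (Fin n), S.card = n / 2 → S ≠ V1 → S ≠ V1ᶜ →
      cutCost G V1 < cutCost G S := by
  classical
  intro S hS hS1 hS2
  have hmod : n % 2 = 0 := Nat.even_iff.mp hn
  have hdin' : ∀ v, din ≤ sameDeg G V1 v := fun v => hdin.2 ⟨v, rfl⟩
  have hdout' : ∀ v, crossDeg G V1 v ≤ dout := fun v => hdout.2 ⟨v, rfl⟩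
  have hV1c : (V1ᶜ : Finset (Fin n)).card = n / 2 := by
    rw [Finset.card_compl, Fintype.card_fin, hV1]; omega
  set b := (V1 \ S).card with hb
  set a := (V1 ∩ S).card with ha
  have hab : a + b = n / 2 := by
    rw [ha, hb, ← hV1]
    rw [← Finset.card_union_of_disjoint (by
      rw [Finset.disjoint_left]; intro x hx hx'
      simp only [Finset.mem_inter, Finset.mem_sdiff] at hx hx'; tauto)]
    congr 1
    ext x
    simp only [Finset.mem_union, Finset.mem_inter, Finset.mem_sdiff]; tauto
  have hb1 : 1 ≤ b := by
    by_contra hcon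
    have : V1 \ S = ∅ := Finset.card_eq_zero.mp (by omega)
    have hsub : V1 ⊆ S := by
      intro x hx
      by_contra hxs
      exact absurd this (Finset.nonempty_iff_ne_empty.mp ⟨x, Finset.mem_sdiff.mpr ⟨hx, hxs⟩⟩)
    exact hS1 (Finset.eq_of_subset_of_card_le hsub (by omega)).symm
  have ha1 : 1 ≤ a := by
    by_contra hcon
    have hemp : V1 ∩ S = ∅ := Finset.card_eq_zero.mp (by omega)
    have hsub : S ⊆ V1ᶜ := by
      intro x hx
      rw [Finset.mem_compl]
      intro hxv
      exact absurd hemp (Finset.nonempty_iff_ne_empty.mp ⟨x, Finset.mem_inter.mpr ⟨hxv, hx⟩⟩)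
    exact hS2 (Finset.eq_of_subset_of_card_le hsub (by omega))
  -- deduce din ≥ dout + m from 4*m ≤ n
  have hcast : ∀ m : ℕ, 4 * m ≤ n → dout + m ≤ din := by
    intro m hm4
    have hmr : (m : ℝ) ≤ (n : ℝ) / 4 := by
      have : (4 * m : ℝ) ≤ (n : ℝ) := by exact_mod_cast hm4
      linarith
    have : (dout : ℝ) + (m : ℝ) < (din : ℝ) + 1 := by linarith
    have : ((dout + m : ℕ) : ℝ) < ((din + 1 : ℕ) : ℝ) := by push_cast; linarith
    have := Nat.cast_lt.mp this
    omega
  by_cases hcase : 4 * b ≤ n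
  · exact MBRaux.key G V1 S hV1 hS din dout b hdin' hdout' rfl hb1 (hcast b hcase)
  · have hSc : (Sᶜ : Finset (Fin n)).card = n / 2 := by
      rw [Finset.card_compl, Fintype.card_fin, hS]; omega
    have hVSc : V1 \ Sᶜ = V1 ∩ S := by
      ext x; simp only [Finset.mem_sdiff, Finset.mem_compl, Finset.mem_inter, not_not]
    have hacard : (V1 \ Sᶜ).card = a := by rw [hVSc]
    have ha4 : 4 * a ≤ n := by omega
    have hkey := MBRaux.key G V1 Sᶜ hV1 hSc din dout a hdin' hdout' hacard ha1 (hcast a ha4)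
    have hcc : cutCost G Sᶜ = cutCost G S := by
      rw [MBRaux.cutCost_eq, MBRaux.cutCost_eq, compl_compl, MBRaux.eCnt_symm]
    rwa [hcc] at hkey
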